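/- For every natural number k there exist nonnegative integers x, y, z, t with x + y + z + t = k + 1 such that the pattern cut S(x,y,z,t) is a maximum cut of CC_k, i.e., its cut size equals the maximum cut size of CC_k. -/

import Mathlib

/-- The cut size of a cut `S` of a finite simple graph `G`: the number of edges of `G` with
exactly one endpoint in `S` (counted as ordered pairs whose first component is in `S`). -/
def cutSize {V : Type*} [Fintype V] [DecidableEq V] (G : SimpleGraph V) [DecidableRel G.Adj]
    (S : Finset V) : ℕ :=
  ((Finset.univ : Finset (V × V)).filter fun p => G.Adj p.1 p.2 ∧ p.1 ∈ S ∧ p.2 ∉ S).card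

/-- The maximum cut size of a finite simple graph `G`. -/
def maxCut {V : Type*} [Fintype V] [DecidableEq V] (G : SimpleGraph V) [DecidableRel G.Adj] : ℕ :=
  Finset.univ.powerset.sup fun S => cutSize G S

def ccRel (k : ℕ) : (Fin (k+1) ⊕ Fin (k+1)) → (Fin (k+1) ⊕ Fin (k+1)) → Prop
  | Sum.inl _, Sum.inl _ => True
  | Sum.inr _, Sum.inr _ => True
  | Sum.inl i, Sum.inr j => (j : ℕ) < (i : ℕ)
  | Sum.inr _, Sum.inl _ => False

instance (k : ℕ) : DecidableRel (ccRel k) := fun u v =>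
  match u, v with
  | Sum.inl _, Sum.inl _ => inferInstanceAs (Decidable True)
  | Sum.inr _, Sum.inr _ => inferInstanceAs (Decidable True)
  | Sum.inl i, Sum.inr j => inferInstanceAs (Decidable ((j : ℕ) < (i : ℕ)))
  | Sum.inr _, Sum.inl _ => inferInstanceAs (Decidable False)

/-- The graph `CC_k`: vertices `v_0,…,v_k` (encoded `Sum.inl i`) and `v'_0,…,v'_k`
(encoded `Sum.inr j`); each side is a clique and `v_i ~ v'_j` iff `j < i`. -/
def CCk (k : ℕ) : SimpleGraph (Fin (k+1) ⊕ Fin (k+1)) := SimpleGraph.fromRel (ccRel k)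

instance (k : ℕ) : DecidableRel (CCk k).Adj := fun u v =>
  inferInstanceAs (Decidable (u ≠ v ∧ (ccRel k u v ∨ ccRel k v u)))

/-- The pattern cut `S(x,y,z,t)` of `CC_k` (for `x+y+z+t = k+1`): `v_i ∈ S` iff
`i < x` or `i ≥ x+y+z`, and `v'_j ∈ S` iff `j < x+y`. -/
def patternCut (k x y z t : ℕ) : Finset (Fin (k+1) ⊕ Fin (k+1)) :=
  ((Finset.univ.filter fun i : Fin (k+1) => (i : ℕ) < x ∨ x + y + z ≤ (i : ℕ)).image Sum.inl) ∪
  ((Finset.univ.filter fun j : Fin (k+1) => (j : ℕ) < x + y).image Sum.inr)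

open Finset
def ind (p : Prop) [Decidable p] : ℕ := if p then 1 else 0

lemma sum_ind {n : ℕ} (p : Fin n → Prop) [DecidablePred p] :
    (∑ i : Fin n, ind (p i)) = (univ.filter p).card := by
  rw [Finset.card_filter]; rfl

lemma sum_sum_ind_mul_const {n : ℕ} (k : ℕ) (p q : Fin n → Prop) [DecidablePred p]
    [DecidablePred q] :
    (∑ i : Fin n, ∑ j : Fin n, k * (ind (p i) * ind (q j)))
      = k * ((univ.filter p).card * (univ.filter q).card) := by
  calc (∑ i : Fin n, ∑ j : Fin n, k * (ind (p i) * ind (q j)))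
      = ∑ i : Fin n, ∑ j : Fin n, (k * ind (p i)) * ind (q j) := by
        simp only [Nat.mul_assoc]
    _ = (∑ i : Fin n, k * ind (p i)) * (∑ j : Fin n, ind (q j)) :=
        (Finset.sum_mul_sum _ _ _ _).symm
    _ = _ := by rw [← Finset.mul_sum, sum_ind, sum_ind, Nat.mul_assoc]

def wmB : Bool → Bool → Bool → Bool → ℕ
  | false, false, false, false => 0
  | false, false, false, true  => 2
  | false, false, true,  false => 2
  | false, false, true,  true  => 3
  | false, true,  false, false => 2
  | false, true,  false, true  => 1
  | false, true,  true,  false => 2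
  | false, true,  true,  true  => 2
  | true,  false, false, false => 2
  | true,  false, false, true  => 2
  | true,  false, true,  false => 1
  | true,  false, true,  true  => 2
  | true,  true,  false, false => 3
  | true,  true,  false, true  => 2
  | true,  true,  true,  false => 2
  | true,  true,  true,  true  => 0

variable {n : ℕ}

def cnt (a b : Fin n → Bool) (sa sb : Bool) : ℕ :=
  (univ.filter fun i => a i = sa ∧ b i = sb).card

lemma wm_expand (a1 b1 a2 b2 : Bool) :
    wmB a1 b1 a2 b2 =
      2 * (ind (a1 = false ∧ b1 = false) * ind (a2 = false ∧ b2 = true)) +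
      2 * (ind (a1 = false ∧ b1 = false) * ind (a2 = true ∧ b2 = false)) +
      3 * (ind (a1 = false ∧ b1 = false) * ind (a2 = true ∧ b2 = true)) +
      2 * (ind (a1 = false ∧ b1 = true) * ind (a2 = false ∧ b2 = false)) +
      1 * (ind (a1 = false ∧ b1 = true) * ind (a2 = false ∧ b2 = true)) +
      2 * (ind (a1 = false ∧ b1 = true) * ind (a2 = true ∧ b2 = false)) +
      2 * (ind (a1 = false ∧ b1 = true) * ind (a2 = true ∧ b2 = true)) +
      2 * (ind (a1 = true ∧ b1 = false) * ind (a2 = false ∧ b2 = false)) +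
      2 * (ind (a1 = true ∧ b1 = false) * ind (a2 = false ∧ b2 = true)) +
      1 * (ind (a1 = true ∧ b1 = false) * ind (a2 = true ∧ b2 = false)) +
      2 * (ind (a1 = true ∧ b1 = false) * ind (a2 = true ∧ b2 = true)) +
      3 * (ind (a1 = true ∧ b1 = true) * ind (a2 = false ∧ b2 = false)) +
      2 * (ind (a1 = true ∧ b1 = true) * ind (a2 = false ∧ b2 = true)) +
      2 * (ind (a1 = true ∧ b1 = true) * ind (a2 = true ∧ b2 = false)) := by
  cases a1 <;> cases b1 <;> cases a2 <;> cases b2 <;> rfl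

lemma sum_wm (a b : Fin n → Bool) :
    (∑ i : Fin n, ∑ j : Fin n, wmB (a i) (b i) (a j) (b j))
      = cnt a b true true * cnt a b true true * 0 +
        (cnt a b false true * cnt a b false true + cnt a b true false * cnt a b true false) +
        4 * (cnt a b false false * cnt a b false true) +
        4 * (cnt a b false false * cnt a b true false) +
        6 * (cnt a b false false * cnt a b true true) +
        4 * (cnt a b false true * cnt a b true false) +
        4 * (cnt a b false true * cnt a b true true) +
        4 * (cnt a b true false * cnt a b true true) := by
  have h : ∀ i j : Fin n, wmB (a i) (b i) (a j) (b j) = _ := fun i j =>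
    wm_expand (a i) (b i) (a j) (b j)
  calc (∑ i : Fin n, ∑ j : Fin n, wmB (a i) (b i) (a j) (b j))
      = ∑ i : Fin n, ∑ j : Fin n, (
      2 * (ind (a i = false ∧ b i = false) * ind (a j = false ∧ b j = true)) +
      2 * (ind (a i = false ∧ b i = false) * ind (a j = true ∧ b j = false)) +
      3 * (ind (a i = false ∧ b i = false) * ind (a j = true ∧ b j = true)) +
      2 * (ind (a i = false ∧ b i = true) * ind (a j = false ∧ b j = false)) +
      1 * (ind (a i = false ∧ b i = true) * ind (a j = false ∧ b j = true)) +
      2 * (ind (a i = false ∧ b i = true) * ind (a j = true ∧ b j = false)) +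
      2 * (ind (a i = false ∧ b i = true) * ind (a j = true ∧ b j = true)) +
      2 * (ind (a i = true ∧ b i = false) * ind (a j = false ∧ b j = false)) +
      2 * (ind (a i = true ∧ b i = false) * ind (a j = false ∧ b j = true)) +
      1 * (ind (a i = true ∧ b i = false) * ind (a j = true ∧ b j = false)) +
      2 * (ind (a i = true ∧ b i = false) * ind (a j = true ∧ b j = true)) +
      3 * (ind (a i = true ∧ b i = true) * ind (a j = false ∧ b j = false)) +
      2 * (ind (a i = true ∧ b i = true) * ind (a j = false ∧ b j = true)) +
      2 * (ind (a i = true ∧ b i = true) * ind (a j = true ∧ b j = false))) := by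
        exact Finset.sum_congr rfl fun i _ => Finset.sum_congr rfl fun j _ =>
          wm_expand (a i) (b i) (a j) (b j)
    _ = _ := by
        simp only [Finset.sum_add_distrib, sum_sum_ind_mul_const]
        unfold cnt
        ring


def Fe (a b : Fin n → Bool) (i j : Fin n) : ℕ :=
  ind (a i = true ∧ a j = false) + ind (b i = true ∧ b j = false) +
  ind ((j:ℕ) < (i:ℕ) ∧ a i = true ∧ b j = false) +
  ind ((j:ℕ) < (i:ℕ) ∧ b j = true ∧ a i = false)

def Le (a b : Fin n → Bool) (i j : Fin n) : ℕ :=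
  ind ((i:ℕ) < (j:ℕ) ∧ a i = false ∧ b i = false ∧ a j = false ∧ b j = true) +
  ind ((i:ℕ) < (j:ℕ) ∧ a i = true ∧ b i = false ∧ a j = false ∧ b j = false) +
  ind ((i:ℕ) < (j:ℕ) ∧ a i = true ∧ b i = true ∧ a j = true ∧ b j = false) +
  ind ((i:ℕ) < (j:ℕ) ∧ a i = false ∧ b i = true ∧ a j = true ∧ b j = true)

def Ue (a b : Fin n → Bool) (i j : Fin n) : ℕ :=
  if (i:ℕ) < (j:ℕ) then wmB (a i) (b i) (a j) (b j) else 0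

lemma pointwise (a b : Fin n → Bool) (i j : Fin n) :
    (Fe a b i j + Le a b i j) + (Fe a b j i + Le a b j i)
      = Ue a b i j + Ue a b j i := by
  rcases Nat.lt_trichotomy (i:ℕ) (j:ℕ) with h | h | h
  · have h' : ¬ (j:ℕ) < (i:ℕ) := Nat.lt_asymm h
    cases h1 : a i <;> cases h2 : b i <;> cases h3 : a j <;> cases h4 : b j <;>
      simp [Fe, Le, Ue, ind, wmB, h, h', h1, h2, h3, h4]
  · have hij : i = j := Fin.ext h
    subst hij
    cases h1 : a i <;> cases h2 : b i <;>
      simp [Fe, Le, Ue, ind, wmB, h1, h2]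
  · have h' : ¬ (i:ℕ) < (j:ℕ) := Nat.lt_asymm h
    cases h1 : a i <;> cases h2 : b i <;> cases h3 : a j <;> cases h4 : b j <;>
      simp [Fe, Le, Ue, ind, wmB, h, h', h1, h2, h3, h4]

lemma sum_comm_fin (g : Fin n → Fin n → ℕ) :
    (∑ i : Fin n, ∑ j : Fin n, g j i) = ∑ i : Fin n, ∑ j : Fin n, g i j :=
  Finset.sum_comm

lemma master (a b : Fin n → Bool) :
    (∑ i : Fin n, ∑ j : Fin n, (Fe a b i j + Le a b i j))
      = ∑ i : Fin n, ∑ j : Fin n, Ue a b i j := by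
  have h2 : ∀ g : Fin n → Fin n → ℕ,
      (∑ i : Fin n, ∑ j : Fin n, (g i j + g j i))
        = 2 * ∑ i : Fin n, ∑ j : Fin n, g i j := by
    intro g
    simp only [Finset.sum_add_distrib]
    rw [sum_comm_fin g]
    omega
  have key := h2 (fun i j => Fe a b i j + Le a b i j)
  have key2 := h2 (Ue a b)
  have hpt : (∑ i : Fin n, ∑ j : Fin n,
      ((Fe a b i j + Le a b i j) + (Fe a b j i + Le a b j i)))
      = ∑ i : Fin n, ∑ j : Fin n, (Ue a b i j + Ue a b j i) :=
    Finset.sum_congr rfl fun i _ => Finset.sum_congr rfl fun j _ => pointwise a b i j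
  omega

lemma wmB_symm (a1 b1 a2 b2 : Bool) : wmB a1 b1 a2 b2 = wmB a2 b2 a1 b1 := by
  cases a1 <;> cases b1 <;> cases a2 <;> cases b2 <;> rfl

lemma wm_diag (a1 b1 : Bool) :
    wmB a1 b1 a1 b1 = ind (a1 = false ∧ b1 = true) + ind (a1 = true ∧ b1 = false) := by
  cases a1 <;> cases b1 <;> rfl

lemma ue_double (a b : Fin n → Bool) :
    2 * (∑ i : Fin n, ∑ j : Fin n, Ue a b i j) + (cnt a b false true + cnt a b true false)
      = ∑ i : Fin n, ∑ j : Fin n, wmB (a i) (b i) (a j) (b j) := by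
  have hpt : ∀ i j : Fin n,
      Ue a b i j + Ue a b j i + (if i = j then wmB (a i) (b i) (a i) (b i) else 0)
        = wmB (a i) (b i) (a j) (b j) := by
    intro i j
    rcases Nat.lt_trichotomy (i:ℕ) (j:ℕ) with h | h | h
    · have h' : ¬ (j:ℕ) < (i:ℕ) := Nat.lt_asymm h
      have hne : ¬ i = j := by intro he; subst he; exact Nat.lt_irrefl _ h
      simp [Ue, h, h', hne]
    · have hij : i = j := Fin.ext h
      subst hij
      simp [Ue]
    · have h' : ¬ (i:ℕ) < (j:ℕ) := Nat.lt_asymm h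
      have hne : ¬ i = j := by intro he; subst he; exact Nat.lt_irrefl _ h
      simp [Ue, h, h', hne, wmB_symm]
  have hsum : (∑ i : Fin n, ∑ j : Fin n,
      (Ue a b i j + Ue a b j i + (if i = j then wmB (a i) (b i) (a i) (b i) else 0)))
      = ∑ i : Fin n, ∑ j : Fin n, wmB (a i) (b i) (a j) (b j) :=
    Finset.sum_congr rfl fun i _ => Finset.sum_congr rfl fun j _ => hpt i j
  have hdiag : (∑ i : Fin n, ∑ j : Fin n, (if i = j then wmB (a i) (b i) (a i) (b i) else 0))
      = cnt a b false true + cnt a b true false := by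
    have h1 : ∀ i : Fin n, (∑ j : Fin n, (if i = j then wmB (a i) (b i) (a i) (b i) else 0))
        = wmB (a i) (b i) (a i) (b i) := by
      intro i
      simp
    rw [Finset.sum_congr rfl fun i _ => h1 i]
    rw [Finset.sum_congr rfl fun i (_ : i ∈ univ) => wm_diag (a i) (b i)]
    rw [Finset.sum_add_distrib, sum_ind, sum_ind]
    rfl
  have hcomm : (∑ i : Fin n, ∑ j : Fin n, Ue a b j i)
      = ∑ i : Fin n, ∑ j : Fin n, Ue a b i j := sum_comm_fin _
  simp only [Finset.sum_add_distrib] at hsum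
  omega

lemma cnt_partition (a b : Fin n → Bool) :
    cnt a b false false + cnt a b false true + cnt a b true false + cnt a b true true = n := by
  have : ∀ i : Fin n, ind (a i = false ∧ b i = false) + ind (a i = false ∧ b i = true)
      + ind (a i = true ∧ b i = false) + ind (a i = true ∧ b i = true) = 1 := by
    intro i; cases h1 : a i <;> cases h2 : b i <;> simp [ind, h1, h2]
  have hsum : (∑ i : Fin n, (ind (a i = false ∧ b i = false) + ind (a i = false ∧ b i = true)
      + ind (a i = true ∧ b i = false) + ind (a i = true ∧ b i = true)))
      = ∑ _i : Fin n, 1 := Finset.sum_congr rfl fun i _ => this i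
  simp only [Finset.sum_add_distrib, sum_ind] at hsum
  simpa [cnt] using hsum

/-- grand identity: `2*(cs-part) + 2*(bad-pairs) + (Y+T) = G X Y Z T`. -/
lemma grand (a b : Fin n → Bool) :
    2 * (∑ i : Fin n, ∑ j : Fin n, Fe a b i j) + 2 * (∑ i : Fin n, ∑ j : Fin n, Le a b i j)
      + (cnt a b false true + cnt a b true false)
      = (cnt a b false true * cnt a b false true + cnt a b true false * cnt a b true false) +
        4 * (cnt a b false false * cnt a b false true) +
        4 * (cnt a b false false * cnt a b true false) +
        6 * (cnt a b false false * cnt a b true true) +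
        4 * (cnt a b false true * cnt a b true false) +
        4 * (cnt a b false true * cnt a b true true) +
        4 * (cnt a b true false * cnt a b true true) := by
  have h1 := master a b
  have h2 := ue_double a b
  have h3 := sum_wm a b
  simp only [Finset.sum_add_distrib] at h1
  omega

lemma sum_sum_ind_pair {n : ℕ} (p : Fin n → Fin n → Prop) [∀ i j, Decidable (p i j)] :
    (∑ i : Fin n, ∑ j : Fin n, ind (p i j))
      = (univ.filter fun q : Fin n × Fin n => p q.1 q.2).card := by
  rw [Finset.card_filter, Fintype.sum_prod_type]; rfl

-- the four bad-pair counts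
def bad1 (a b : Fin n → Bool) : ℕ := (univ.filter fun q : Fin n × Fin n =>
  (q.1:ℕ) < (q.2:ℕ) ∧ a q.1 = false ∧ b q.1 = false ∧ a q.2 = false ∧ b q.2 = true).card
def bad2 (a b : Fin n → Bool) : ℕ := (univ.filter fun q : Fin n × Fin n =>
  (q.1:ℕ) < (q.2:ℕ) ∧ a q.1 = true ∧ b q.1 = false ∧ a q.2 = false ∧ b q.2 = false).card
def bad3 (a b : Fin n → Bool) : ℕ := (univ.filter fun q : Fin n × Fin n =>
  (q.1:ℕ) < (q.2:ℕ) ∧ a q.1 = true ∧ b q.1 = true ∧ a q.2 = true ∧ b q.2 = false).card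
def bad4 (a b : Fin n → Bool) : ℕ := (univ.filter fun q : Fin n × Fin n =>
  (q.1:ℕ) < (q.2:ℕ) ∧ a q.1 = false ∧ b q.1 = true ∧ a q.2 = true ∧ b q.2 = true).card

lemma le_total_sum (a b : Fin n → Bool) :
    (∑ i : Fin n, ∑ j : Fin n, Le a b i j) = bad1 a b + bad2 a b + bad3 a b + bad4 a b := by
  unfold Le
  simp only [Finset.sum_add_distrib, sum_sum_ind_pair]
  rfl

section Quad
variable (a b : Fin n → Bool)

private def T00 (a b : Fin n → Bool) : Finset (Fin n) := univ.filter fun i => a i = false ∧ b i = false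
private def T01 (a b : Fin n → Bool) : Finset (Fin n) := univ.filter fun i => a i = false ∧ b i = true
private def T10 (a b : Fin n → Bool) : Finset (Fin n) := univ.filter fun i => a i = true ∧ b i = false
private def T11 (a b : Fin n → Bool) : Finset (Fin n) := univ.filter fun i => a i = true ∧ b i = true

lemma quad_bound (a b : Fin n → Bool) :
    cnt a b false true * (cnt a b false false * (cnt a b true false * cnt a b true true))
      ≤ bad1 a b * (cnt a b true false * cnt a b true true)
        + bad2 a b * (cnt a b false true * cnt a b true true)
        + bad3 a b * (cnt a b false true * cnt a b false false)
        + bad4 a b * (cnt a b false false * cnt a b true false) := by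
  classical
  set Q : Finset (Fin n × Fin n × Fin n × Fin n) :=
    T01 a b ×ˢ T00 a b ×ˢ T10 a b ×ˢ T11 a b with hQ
  have hQcard : Q.card = cnt a b false true * (cnt a b false false *
      (cnt a b true false * cnt a b true true)) := by
    simp [hQ, Finset.card_product, T00, T01, T10, T11, cnt]
  have hcover : Q ⊆ (Q.filter fun e => (e.2.1:ℕ) < (e.1:ℕ))
      ∪ (Q.filter fun e => (e.2.2.1:ℕ) < (e.2.1:ℕ))
      ∪ (Q.filter fun e => (e.2.2.2:ℕ) < (e.2.2.1:ℕ))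
      ∪ (Q.filter fun e => (e.1:ℕ) < (e.2.2.2:ℕ)) := by
    intro e he
    obtain ⟨p, q, r, s⟩ := e
    simp only [hQ, Finset.mem_product, T00, T01, T10, T11, Finset.mem_filter,
      Finset.mem_univ, true_and] at he
    obtain ⟨⟨hp1, hp2⟩, ⟨hq1, hq2⟩, ⟨hr1, hr2⟩, hs1, hs2⟩ := he
    simp only [Finset.mem_union, Finset.mem_filter]
    by_contra hcon
    push_neg at hcon
    have hmem : (p, q, r, s) ∈ Q := by
      simp only [hQ, Finset.mem_product, T00, T01, T10, T11, Finset.mem_filter,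
        Finset.mem_univ, true_and]
      exact ⟨⟨hp1, hp2⟩, ⟨hq1, hq2⟩, ⟨hr1, hr2⟩, hs1, hs2⟩
    have h1 := hcon.1.1.1 hmem
    have h2 := hcon.1.1.2 hmem
    have h3 := hcon.1.2 hmem
    have h4 := hcon.2 hmem
    have hpq : (p:ℕ) ≠ (q:ℕ) := by
      intro hv; have : p = q := Fin.ext hv; subst this; rw [hq2] at hp2; exact Bool.noConfusion hp2
    have hqr : (q:ℕ) ≠ (r:ℕ) := by
      intro hv; have : q = r := Fin.ext hv; subst this; rw [hr1] at hq1; exact Bool.noConfusion hq1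
    have hrs : (r:ℕ) ≠ (s:ℕ) := by
      intro hv; have : r = s := Fin.ext hv; subst this; rw [hs2] at hr2; exact Bool.noConfusion hr2
    have hsp : (s:ℕ) ≠ (p:ℕ) := by
      intro hv; have : s = p := Fin.ext hv; subst this; rw [hp1] at hs1; exact Bool.noConfusion hs1
    omega
  have hcard1 : (Q.filter fun e => (e.2.1:ℕ) < (e.1:ℕ)).card
      ≤ bad1 a b * (cnt a b true false * cnt a b true true) := by
    have : bad1 a b * (cnt a b true false * cnt a b true true)
        = (((univ.filter fun q : Fin n × Fin n =>
            (q.1:ℕ) < (q.2:ℕ) ∧ a q.1 = false ∧ b q.1 = false ∧ a q.2 = false ∧ b q.2 = true)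
            ×ˢ (T10 a b ×ˢ T11 a b)).card) := by
      simp [Finset.card_product, bad1, T10, T11, cnt]
    rw [this]
    apply Finset.card_le_card_of_injOn (fun e => ((e.2.1, e.1), (e.2.2.1, e.2.2.2)))
    · intro e he
      obtain ⟨p, q, r, s⟩ := e
      simp only [Finset.mem_coe, hQ, Finset.mem_filter, Finset.mem_product, T00, T01, T10, T11,
        Finset.mem_univ, true_and] at he ⊢
      obtain ⟨⟨⟨hp1, hp2⟩, ⟨hq1, hq2⟩, hr, hs⟩, hlt⟩ := he
      exact ⟨⟨hlt, hq1, hq2, hp1, hp2⟩, hr, hs⟩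
    · intro e1 _ e2 _ hee
      obtain ⟨p1, q1, r1, s1⟩ := e1; obtain ⟨p2, q2, r2, s2⟩ := e2
      simp only [Prod.mk.injEq] at hee
      obtain ⟨⟨h1, h2⟩, h3, h4⟩ := hee
      simp [h1, h2, h3, h4]
  have hcard2 : (Q.filter fun e => (e.2.2.1:ℕ) < (e.2.1:ℕ)).card
      ≤ bad2 a b * (cnt a b false true * cnt a b true true) := by
    have : bad2 a b * (cnt a b false true * cnt a b true true)
        = (((univ.filter fun q : Fin n × Fin n =>
            (q.1:ℕ) < (q.2:ℕ) ∧ a q.1 = true ∧ b q.1 = false ∧ a q.2 = false ∧ b q.2 = false)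
            ×ˢ (T01 a b ×ˢ T11 a b)).card) := by
      simp [Finset.card_product, bad2, T01, T11, cnt]
    rw [this]
    apply Finset.card_le_card_of_injOn (fun e => ((e.2.2.1, e.2.1), (e.1, e.2.2.2)))
    · intro e he
      obtain ⟨p, q, r, s⟩ := e
      simp only [Finset.mem_coe, hQ, Finset.mem_filter, Finset.mem_product, T00, T01, T10, T11,
        Finset.mem_univ, true_and] at he ⊢
      obtain ⟨⟨⟨hp1, hp2⟩, ⟨hq1, hq2⟩, ⟨hr1, hr2⟩, hs⟩, hlt⟩ := he
      exact ⟨⟨hlt, hr1, hr2, hq1, hq2⟩, ⟨hp1, hp2⟩, hs⟩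
    · intro e1 _ e2 _ hee
      obtain ⟨p1, q1, r1, s1⟩ := e1; obtain ⟨p2, q2, r2, s2⟩ := e2
      simp only [Prod.mk.injEq] at hee
      obtain ⟨⟨h1, h2⟩, h3, h4⟩ := hee
      simp [h1, h2, h3, h4]
  have hcard3 : (Q.filter fun e => (e.2.2.2:ℕ) < (e.2.2.1:ℕ)).card
      ≤ bad3 a b * (cnt a b false true * cnt a b false false) := by
    have : bad3 a b * (cnt a b false true * cnt a b false false)
        = (((univ.filter fun q : Fin n × Fin n =>
            (q.1:ℕ) < (q.2:ℕ) ∧ a q.1 = true ∧ b q.1 = true ∧ a q.2 = true ∧ b q.2 = false)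
            ×ˢ (T01 a b ×ˢ T00 a b)).card) := by
      simp [Finset.card_product, bad3, T01, T00, cnt]
    rw [this]
    apply Finset.card_le_card_of_injOn (fun e => ((e.2.2.2, e.2.2.1), (e.1, e.2.1)))
    · intro e he
      obtain ⟨p, q, r, s⟩ := e
      simp only [Finset.mem_coe, hQ, Finset.mem_filter, Finset.mem_product, T00, T01, T10, T11,
        Finset.mem_univ, true_and] at he ⊢
      obtain ⟨⟨⟨hp1, hp2⟩, ⟨hq1, hq2⟩, ⟨hr1, hr2⟩, hs1, hs2⟩, hlt⟩ := he
      exact ⟨⟨hlt, hs1, hs2, hr1, hr2⟩, ⟨hp1, hp2⟩, hq1, hq2⟩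
    · intro e1 _ e2 _ hee
      obtain ⟨p1, q1, r1, s1⟩ := e1; obtain ⟨p2, q2, r2, s2⟩ := e2
      simp only [Prod.mk.injEq] at hee
      obtain ⟨⟨h1, h2⟩, h3, h4⟩ := hee
      simp [h1, h2, h3, h4]
  have hcard4 : (Q.filter fun e => (e.1:ℕ) < (e.2.2.2:ℕ)).card
      ≤ bad4 a b * (cnt a b false false * cnt a b true false) := by
    have : bad4 a b * (cnt a b false false * cnt a b true false)
        = (((univ.filter fun q : Fin n × Fin n =>
            (q.1:ℕ) < (q.2:ℕ) ∧ a q.1 = false ∧ b q.1 = true ∧ a q.2 = true ∧ b q.2 = true)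
            ×ˢ (T00 a b ×ˢ T10 a b)).card) := by
      simp [Finset.card_product, bad4, T00, T10, cnt]
    rw [this]
    apply Finset.card_le_card_of_injOn (fun e => ((e.1, e.2.2.2), (e.2.1, e.2.2.1)))
    · intro e he
      obtain ⟨p, q, r, s⟩ := e
      simp only [Finset.mem_coe, hQ, Finset.mem_filter, Finset.mem_product, T00, T01, T10, T11,
        Finset.mem_univ, true_and] at he ⊢
      obtain ⟨⟨⟨hp1, hp2⟩, ⟨hq1, hq2⟩, ⟨hr1, hr2⟩, hs1, hs2⟩, hlt⟩ := he
      exact ⟨⟨hlt, hp1, hp2, hs1, hs2⟩, ⟨hq1, hq2⟩, hr1, hr2⟩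
    · intro e1 _ e2 _ hee
      obtain ⟨p1, q1, r1, s1⟩ := e1; obtain ⟨p2, q2, r2, s2⟩ := e2
      simp only [Prod.mk.injEq] at hee
      obtain ⟨⟨h1, h2⟩, h3, h4⟩ := hee
      simp [h1, h2, h3, h4]
  calc cnt a b false true * (cnt a b false false * (cnt a b true false * cnt a b true true))
      = Q.card := hQcard.symm
    _ ≤ _ := Finset.card_le_card hcover
    _ ≤ _ := by
        refine le_trans (Finset.card_union_le _ _) ?_
        refine le_trans (Nat.add_le_add_right (Finset.card_union_le _ _) _) ?_
        refine le_trans (Nat.add_le_add_right (Nat.add_le_add_right (Finset.card_union_le _ _) _) _) ?_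
        omega

end Quad

lemma four_max (m1 m2 m3 m4 : ℕ) :
    (m2 ≤ m1 ∧ m3 ≤ m1 ∧ m4 ≤ m1) ∨ (m1 ≤ m2 ∧ m3 ≤ m2 ∧ m4 ≤ m2) ∨
    (m1 ≤ m3 ∧ m2 ≤ m3 ∧ m4 ≤ m3) ∨ (m1 ≤ m4 ∧ m2 ≤ m4 ∧ m3 ≤ m4) := by omega

lemma pick_loss (B1 B2 B3 B4 X Y Z T : ℕ)
    (h : Y * (Z * (T * X)) ≤ B1 * (T * X) + B2 * (Y * X) + B3 * (Y * Z) + B4 * (Z * T)) :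
    X * T ≤ B1 + B2 + B3 + B4 ∨ X * Y ≤ B1 + B2 + B3 + B4 ∨
    Y * Z ≤ B1 + B2 + B3 + B4 ∨ Z * T ≤ B1 + B2 + B3 + B4 := by
  by_contra hc
  push_neg at hc
  obtain ⟨h1, h2, h3, h4⟩ := hc
  rcases four_max (T*X) (Y*X) (Y*Z) (Z*T) with ⟨ha, hb, hd⟩ | ⟨ha, hb, hd⟩ | ⟨ha, hb, hd⟩ | ⟨ha, hb, hd⟩
  · have hs : B1*(T*X) + B2*(Y*X) + B3*(Y*Z) + B4*(Z*T) ≤ (B1+B2+B3+B4)*(T*X) := by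
      calc B1*(T*X) + B2*(Y*X) + B3*(Y*Z) + B4*(Z*T)
          ≤ B1*(T*X) + B2*(T*X) + B3*(T*X) + B4*(T*X) := by
            gcongr <;> first | exact ha | exact hb | exact hd | exact le_rfl
        _ = (B1+B2+B3+B4)*(T*X) := by ring
    have hpos : 0 < T*X := by nlinarith
    have hlt : (B1+B2+B3+B4)*(T*X) < (Y*Z)*(T*X) := mul_lt_mul_of_pos_right h3 hpos
    have hfin : Y*(Z*(T*X)) < (Y*Z)*(T*X) := lt_of_le_of_lt (h.trans hs) hlt
    rw [show (Y*Z)*(T*X) = Y*(Z*(T*X)) from by ring] at hfin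
    exact lt_irrefl _ hfin
  · have hs : B1*(T*X) + B2*(Y*X) + B3*(Y*Z) + B4*(Z*T) ≤ (B1+B2+B3+B4)*(Y*X) := by
      calc B1*(T*X) + B2*(Y*X) + B3*(Y*Z) + B4*(Z*T)
          ≤ B1*(Y*X) + B2*(Y*X) + B3*(Y*X) + B4*(Y*X) := by
            gcongr <;> first | exact ha | exact hb | exact hd | exact le_rfl
        _ = (B1+B2+B3+B4)*(Y*X) := by ring
    have hpos : 0 < Y*X := by nlinarith
    have hlt : (B1+B2+B3+B4)*(Y*X) < (Z*T)*(Y*X) := mul_lt_mul_of_pos_right h4 hpos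
    have hfin : Y*(Z*(T*X)) < (Z*T)*(Y*X) := lt_of_le_of_lt (h.trans hs) hlt
    rw [show (Z*T)*(Y*X) = Y*(Z*(T*X)) from by ring] at hfin
    exact lt_irrefl _ hfin
  · have hs : B1*(T*X) + B2*(Y*X) + B3*(Y*Z) + B4*(Z*T) ≤ (B1+B2+B3+B4)*(Y*Z) := by
      calc B1*(T*X) + B2*(Y*X) + B3*(Y*Z) + B4*(Z*T)
          ≤ B1*(Y*Z) + B2*(Y*Z) + B3*(Y*Z) + B4*(Y*Z) := by
            gcongr <;> first | exact ha | exact hb | exact hd | exact le_rfl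
        _ = (B1+B2+B3+B4)*(Y*Z) := by ring
    have hpos : 0 < Y*Z := by nlinarith
    have hlt : (B1+B2+B3+B4)*(Y*Z) < (X*T)*(Y*Z) := mul_lt_mul_of_pos_right h1 hpos
    have hfin : Y*(Z*(T*X)) < (X*T)*(Y*Z) := lt_of_le_of_lt (h.trans hs) hlt
    rw [show (X*T)*(Y*Z) = Y*(Z*(T*X)) from by ring] at hfin
    exact lt_irrefl _ hfin
  · have hs : B1*(T*X) + B2*(Y*X) + B3*(Y*Z) + B4*(Z*T) ≤ (B1+B2+B3+B4)*(Z*T) := by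
      calc B1*(T*X) + B2*(Y*X) + B3*(Y*Z) + B4*(Z*T)
          ≤ B1*(Z*T) + B2*(Z*T) + B3*(Z*T) + B4*(Z*T) := by
            gcongr <;> first | exact ha | exact hb | exact hd | exact le_rfl
        _ = (B1+B2+B3+B4)*(Z*T) := by ring
    have hpos : 0 < Z*T := by nlinarith
    have hlt : (B1+B2+B3+B4)*(Z*T) < (X*Y)*(Z*T) := mul_lt_mul_of_pos_right h2 hpos
    have hfin : Y*(Z*(T*X)) < (X*Y)*(Z*T) := lt_of_le_of_lt (h.trans hs) hlt
    rw [show (X*Y)*(Z*T) = Y*(Z*(T*X)) from by ring] at hfin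
    exact lt_irrefl _ hfin

lemma sum_ind' {n : ℕ} (p : Fin n → Prop) [DecidablePred p] :
    (∑ i : Fin n, ind (p i)) = (univ.filter p).card := by
  rw [Finset.card_filter]; rfl

lemma card_interval {n lo hi : ℕ} (h : hi ≤ n) :
    (univ.filter fun i : Fin n => lo ≤ (i : ℕ) ∧ (i : ℕ) < hi).card = hi - lo := by
  rw [Finset.card_filter, Fin.sum_univ_eq_sum_range (fun i => if lo ≤ i ∧ i < hi then 1 else 0),
    ← Finset.card_filter]
  have : (Finset.range n).filter (fun i => lo ≤ i ∧ i < hi) = Finset.Ico lo hi := by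
    ext m; simp [Finset.mem_range, Finset.mem_Ico]; omega
  rw [this, Nat.card_Ico]

lemma cutSize_eq_sum (k : ℕ) (S : Finset (Fin (k+1) ⊕ Fin (k+1))) :
    cutSize (CCk k) S = ∑ i : Fin (k+1), ∑ j : Fin (k+1),
      Fe (fun i => decide (Sum.inl i ∈ S)) (fun i => decide (Sum.inr i ∈ S)) i j := by
  classical
  set a : Fin (k+1) → Bool := fun i => decide (Sum.inl i ∈ S) with ha
  set b : Fin (k+1) → Bool := fun i => decide (Sum.inr i ∈ S) with hb
  unfold cutSize
  rw [Finset.card_filter, Fintype.sum_prod_type, Fintype.sum_sum_type]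
  have hll : ∀ i : Fin (k+1), (∑ v : Fin (k+1) ⊕ Fin (k+1),
      if (CCk k).Adj (Sum.inl i) v ∧ Sum.inl i ∈ S ∧ v ∉ S then 1 else 0)
      = ∑ j : Fin (k+1), (ind (a i = true ∧ a j = false) +
          ind ((j:ℕ) < (i:ℕ) ∧ a i = true ∧ b j = false)) := by
    intro i
    rw [Fintype.sum_sum_type, ← Finset.sum_add_distrib]
    refine Finset.sum_congr rfl fun j _ => ?_
    have h1 : (if (CCk k).Adj (Sum.inl i) (Sum.inl j) ∧ Sum.inl i ∈ S ∧ Sum.inl j ∉ S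
        then 1 else 0) = ind (a i = true ∧ a j = false) := by
      by_cases hij : i = j
      · subst hij
        simp [CCk, SimpleGraph.fromRel_adj, ind, ha]
      · have : (CCk k).Adj (Sum.inl i) (Sum.inl j) := by
          simp [CCk, SimpleGraph.fromRel_adj, ccRel, hij]
        simp only [this, true_and, ind, ha]
        simp [decide_eq_true_eq]
    have h2 : (if (CCk k).Adj (Sum.inl i) (Sum.inr j) ∧ Sum.inl i ∈ S ∧ Sum.inr j ∉ S
        then 1 else 0) = ind ((j:ℕ) < (i:ℕ) ∧ a i = true ∧ b j = false) := by
      have hadj : (CCk k).Adj (Sum.inl i) (Sum.inr j) ↔ (j:ℕ) < (i:ℕ) := by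
        simp [CCk, SimpleGraph.fromRel_adj, ccRel]
      by_cases hlt : (j:ℕ) < (i:ℕ)
      · simp only [hadj, hlt, true_and, ind, ha, hb]
        simp [decide_eq_true_eq]
      · simp [hadj, hlt, ind]
    omega
  have hrr : ∀ j : Fin (k+1), (∑ v : Fin (k+1) ⊕ Fin (k+1),
      if (CCk k).Adj (Sum.inr j) v ∧ Sum.inr j ∈ S ∧ v ∉ S then 1 else 0)
      = ∑ i : Fin (k+1), (ind (b j = true ∧ b i = false) +
          ind ((j:ℕ) < (i:ℕ) ∧ b j = true ∧ a i = false)) := by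
    intro j
    rw [Fintype.sum_sum_type, ← Finset.sum_add_distrib]
    refine Finset.sum_congr rfl fun i _ => ?_
    have h1 : (if (CCk k).Adj (Sum.inr j) (Sum.inr i) ∧ Sum.inr j ∈ S ∧ Sum.inr i ∉ S
        then 1 else 0) = ind (b j = true ∧ b i = false) := by
      by_cases hij : j = i
      · subst hij
        simp [CCk, SimpleGraph.fromRel_adj, ind, hb]
      · have : (CCk k).Adj (Sum.inr j) (Sum.inr i) := by
          simp [CCk, SimpleGraph.fromRel_adj, ccRel, hij]
        simp only [this, true_and, ind, hb]
        simp [decide_eq_true_eq]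
    have h2 : (if (CCk k).Adj (Sum.inr j) (Sum.inl i) ∧ Sum.inr j ∈ S ∧ Sum.inl i ∉ S
        then 1 else 0) = ind ((j:ℕ) < (i:ℕ) ∧ b j = true ∧ a i = false) := by
      have hadj : (CCk k).Adj (Sum.inr j) (Sum.inl i) ↔ (j:ℕ) < (i:ℕ) := by
        simp [CCk, SimpleGraph.fromRel_adj, ccRel]
      by_cases hlt : (j:ℕ) < (i:ℕ)
      · simp only [hadj, hlt, true_and, ind, ha, hb]
        simp [decide_eq_true_eq]
      · simp [hadj, hlt, ind]
    omega
  rw [Finset.sum_congr rfl fun i _ => hll i, Finset.sum_congr rfl fun j _ => hrr j]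
  unfold Fe
  simp only [Finset.sum_add_distrib]
  have hc1 : (∑ j : Fin (k+1), ∑ i : Fin (k+1), ind (b j = true ∧ b i = false))
      = ∑ i : Fin (k+1), ∑ j : Fin (k+1), ind (b i = true ∧ b j = false) := rfl
  have hc2 : (∑ j : Fin (k+1), ∑ i : Fin (k+1), ind ((j:ℕ) < (i:ℕ) ∧ b j = true ∧ a i = false))
      = ∑ i : Fin (k+1), ∑ j : Fin (k+1), ind ((j:ℕ) < (i:ℕ) ∧ b j = true ∧ a i = false) :=
    Finset.sum_comm
  omega

section pattern
variable (k x y z t : ℕ)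

lemma pat_a (i : Fin (k+1)) :
    (decide (Sum.inl i ∈ patternCut k x y z t) = true) ↔ ((i:ℕ) < x ∨ x + y + z ≤ (i:ℕ)) := by
  simp [patternCut]

lemma pat_b (i : Fin (k+1)) :
    (decide (Sum.inr i ∈ patternCut k x y z t) = true) ↔ ((i:ℕ) < x + y) := by
  simp [patternCut]

lemma pat_a' (i : Fin (k+1)) :
    (decide (Sum.inl i ∈ patternCut k x y z t) = false) ↔ ¬((i:ℕ) < x ∨ x + y + z ≤ (i:ℕ)) := by
  rw [Bool.eq_false_iff, ne_eq, pat_a]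

lemma pat_b' (i : Fin (k+1)) :
    (decide (Sum.inr i ∈ patternCut k x y z t) = false) ↔ ¬((i:ℕ) < x + y) := by
  rw [Bool.eq_false_iff, ne_eq, pat_b]

variable (hsum : x + y + z + t = k + 1)
include hsum

lemma pat_cnt_tt :
    cnt (fun i => decide (Sum.inl i ∈ patternCut k x y z t))
        (fun i => decide (Sum.inr i ∈ patternCut k x y z t)) true true = x := by
  unfold cnt
  have he : (univ.filter fun i : Fin (k+1) =>
      (decide (Sum.inl i ∈ patternCut k x y z t) = true ∧
       decide (Sum.inr i ∈ patternCut k x y z t) = true))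
      = univ.filter fun i : Fin (k+1) => (0 ≤ (i:ℕ) ∧ (i:ℕ) < x) := by
    apply Finset.filter_congr
    intro i _
    rw [pat_a, pat_b]
    omega
  rw [he, card_interval (show x ≤ k+1 by omega)]
  omega

lemma pat_cnt_ft :
    cnt (fun i => decide (Sum.inl i ∈ patternCut k x y z t))
        (fun i => decide (Sum.inr i ∈ patternCut k x y z t)) false true = y := by
  unfold cnt
  have he : (univ.filter fun i : Fin (k+1) =>
      (decide (Sum.inl i ∈ patternCut k x y z t) = false ∧
       decide (Sum.inr i ∈ patternCut k x y z t) = true))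
      = univ.filter fun i : Fin (k+1) => (x ≤ (i:ℕ) ∧ (i:ℕ) < x + y) := by
    apply Finset.filter_congr
    intro i _
    rw [pat_a', pat_b]
    omega
  rw [he, card_interval (show x + y ≤ k+1 by omega)]
  omega

lemma pat_cnt_ff :
    cnt (fun i => decide (Sum.inl i ∈ patternCut k x y z t))
        (fun i => decide (Sum.inr i ∈ patternCut k x y z t)) false false = z := by
  unfold cnt
  have he : (univ.filter fun i : Fin (k+1) =>
      (decide (Sum.inl i ∈ patternCut k x y z t) = false ∧
       decide (Sum.inr i ∈ patternCut k x y z t) = false))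
      = univ.filter fun i : Fin (k+1) => (x + y ≤ (i:ℕ) ∧ (i:ℕ) < x + y + z) := by
    apply Finset.filter_congr
    intro i _
    rw [pat_a', pat_b']
    omega
  rw [he, card_interval (show x + y + z ≤ k+1 by omega)]
  omega

lemma pat_cnt_tf :
    cnt (fun i => decide (Sum.inl i ∈ patternCut k x y z t))
        (fun i => decide (Sum.inr i ∈ patternCut k x y z t)) true false = t := by
  unfold cnt
  have he : (univ.filter fun i : Fin (k+1) =>
      (decide (Sum.inl i ∈ patternCut k x y z t) = true ∧
       decide (Sum.inr i ∈ patternCut k x y z t) = false))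
      = univ.filter fun i : Fin (k+1) => (x + y + z ≤ (i:ℕ) ∧ (i:ℕ) < k + 1) := by
    apply Finset.filter_congr
    intro i _
    rw [pat_a, pat_b']
    have := i.isLt
    omega
  rw [he, card_interval (show k + 1 ≤ k+1 by omega)]
  omega

lemma pat_loss :
    (∑ i : Fin (k+1), ∑ j : Fin (k+1),
      Le (fun i => decide (Sum.inl i ∈ patternCut k x y z t))
         (fun i => decide (Sum.inr i ∈ patternCut k x y z t)) i j) = x * t := by
  have hpt : ∀ i j : Fin (k+1),
      Le (fun i => decide (Sum.inl i ∈ patternCut k x y z t))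
         (fun i => decide (Sum.inr i ∈ patternCut k x y z t)) i j
      = 1 * (ind ((decide (Sum.inl i ∈ patternCut k x y z t)) = true ∧
                  (decide (Sum.inr i ∈ patternCut k x y z t)) = true)
           * ind ((decide (Sum.inl j ∈ patternCut k x y z t)) = true ∧
                  (decide (Sum.inr j ∈ patternCut k x y z t)) = false)) := by
    intro i j
    unfold Le ind
    simp only [pat_a, pat_b, pat_a', pat_b']
    split_ifs <;> omega
  rw [Finset.sum_congr rfl fun i _ => Finset.sum_congr rfl fun j _ => hpt i j,
    sum_sum_ind_mul_const, one_mul]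
  have h1 := pat_cnt_tt k x y z t hsum
  have h2 := pat_cnt_tf k x y z t hsum
  unfold cnt at h1 h2
  rw [h1, h2]

end pattern

def BIGFORM (x y z t : ℕ) : ℕ :=
  (y*y + t*t) + 4*(z*y) + 4*(z*t) + 6*(z*x) + 4*(y*t) + 4*(y*x) + 4*(t*x)

lemma grand' {n : ℕ} (a b : Fin n → Bool) :
    2 * (∑ i : Fin n, ∑ j : Fin n, Fe a b i j) + 2 * (∑ i : Fin n, ∑ j : Fin n, Le a b i j)
      + (cnt a b false true + cnt a b true false)
      = BIGFORM (cnt a b true true) (cnt a b false true) (cnt a b false false)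
          (cnt a b true false) := by
  have := grand a b
  unfold BIGFORM
  omega


/-- For every `k` there are nonnegative integers `x, y, z, t` with `x+y+z+t = k+1` such that
the pattern cut `S(x,y,z,t)` is a maximum cut of `CC_k`. -/
theorem CCk_exists_pattern_max_cut (k : ℕ) :
    ∃ x y z t : ℕ, x + y + z + t = k + 1 ∧
      cutSize (CCk k) (patternCut k x y z t) = maxCut (CCk k) := by

  classical
  obtain ⟨S₀, _, hS₀⟩ := Finset.exists_mem_eq_sup
    (univ.powerset : Finset (Finset (Fin (k+1) ⊕ Fin (k+1))))
    ⟨∅, Finset.empty_mem_powerset _⟩ (fun S => cutSize (CCk k) S)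
  have hmax : maxCut (CCk k) = cutSize (CCk k) S₀ := hS₀
  set a : Fin (k+1) → Bool := fun i => decide (Sum.inl i ∈ S₀) with ha
  set b : Fin (k+1) → Bool := fun i => decide (Sum.inr i ∈ S₀) with hb
  set X := cnt a b true true with hX
  set Y := cnt a b false true with hY
  set Z := cnt a b false false with hZ
  set T := cnt a b true false with hT
  have hpart : Z + Y + T + X = k + 1 := cnt_partition a b
  set L : ℕ := ∑ i : Fin (k+1), ∑ j : Fin (k+1), Le a b i j with hLdef
  have hgrand : 2 * cutSize (CCk k) S₀ + 2 * L + (Y + T) = BIGFORM X Y Z T := by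
    have := grand' a b
    rw [← cutSize_eq_sum k S₀] at this
    exact this
  -- pattern key
  have key : ∀ x' y' z' t' : ℕ, x' + y' + z' + t' = k + 1 →
      2 * cutSize (CCk k) (patternCut k x' y' z' t') + 2 * (x' * t') + (y' + t')
        = BIGFORM x' y' z' t' := by
    intro x' y' z' t' hs
    have hg := grand' (fun i => decide (Sum.inl i ∈ patternCut k x' y' z' t'))
      (fun i => decide (Sum.inr i ∈ patternCut k x' y' z' t'))
    rw [← cutSize_eq_sum k (patternCut k x' y' z' t'), pat_loss k x' y' z' t' hs,
      pat_cnt_tt k x' y' z' t' hs, pat_cnt_ft k x' y' z' t' hs, pat_cnt_ff k x' y' z' t' hs,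
      pat_cnt_tf k x' y' z' t' hs] at hg
    exact hg
  -- upper bound for any pattern cut
  have hub : ∀ x' y' z' t' : ℕ,
      cutSize (CCk k) (patternCut k x' y' z' t') ≤ maxCut (CCk k) := by
    intro x' y' z' t'
    exact Finset.le_sup (f := fun S => cutSize (CCk k) S)
      (Finset.mem_powerset.mpr (Finset.subset_univ _))
  -- pick the loss
  have hquad := quad_bound a b
  have hpick := pick_loss (bad1 a b) (bad2 a b) (bad3 a b) (bad4 a b) X Y Z T hquad
  have hLsum : bad1 a b + bad2 a b + bad3 a b + bad4 a b = L := (le_total_sum a b).symm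
  rcases hpick with h | h | h | h
  · refine ⟨X, Y, Z, T, by omega, ?_⟩
    have hkey := key X Y Z T (by omega)
    have hbig : BIGFORM X Y Z T = BIGFORM X Y Z T := rfl
    have hl : X * T ≤ L := by omega
    have hge : cutSize (CCk k) S₀ ≤ cutSize (CCk k) (patternCut k X Y Z T) := by
      linarith [hkey, hgrand, hl]
    have := hub X Y Z T
    omega
  · refine ⟨X, T, Z, Y, by omega, ?_⟩
    have hkey := key X T Z Y (by omega)
    have hbig : BIGFORM X T Z Y = BIGFORM X Y Z T := by unfold BIGFORM; ring
    rw [hbig] at hkey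
    have hl : X * Y ≤ L := by omega
    have hge : cutSize (CCk k) S₀ ≤ cutSize (CCk k) (patternCut k X T Z Y) := by
      linarith [hkey, hgrand, hl]
    have := hub X T Z Y
    omega
  · refine ⟨Z, T, X, Y, by omega, ?_⟩
    have hkey := key Z T X Y (by omega)
    have hbig : BIGFORM Z T X Y = BIGFORM X Y Z T := by unfold BIGFORM; ring
    rw [hbig] at hkey
    have hl : Z * Y ≤ L := by
      have : Y * Z = Z * Y := Nat.mul_comm _ _
      omega
    have hge : cutSize (CCk k) S₀ ≤ cutSize (CCk k) (patternCut k Z T X Y) := by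
      linarith [hkey, hgrand, hl]
    have := hub Z T X Y
    omega
  · refine ⟨Z, Y, X, T, by omega, ?_⟩
    have hkey := key Z Y X T (by omega)
    have hbig : BIGFORM Z Y X T = BIGFORM X Y Z T := by unfold BIGFORM; ring
    rw [hbig] at hkey
    have hl : Z * T ≤ L := by omega
    have hge : cutSize (CCk k) S₀ ≤ cutSize (CCk k) (patternCut k Z Y X T) := by
      linarith [hkey, hgrand, hl]
    have := hub Z Y X T
    omega
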